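/- Let X ⊆ ℝⁿ be a nonempty convex compact set with κ = max_{x∈X} ‖x‖₂ > 0 and C = cone({κ} × X) ⊆ ℝ^{n+1}. Let ω > 0, f ∈ ℝⁿ, x ∈ X, α ≥ 0 and u' = α·(κ, x) ∈ C. Set v = (⟨f, x⟩/κ, −f) ∈ ℝ^{n+1} and u = π_C(u' + ω v). Assume u ≠ 0 and let x⁺ ∈ X and β > 0 be such that u = β·(κ, x⁺). Then ⟨f, x⁺⟩ ≤ ⟨f, x⟩ − (κ / (ω · ‖u‖_∞)) · ‖u − u'‖₂². In particular, if F(·, y) is linear with F(z, y) = ⟨f, z⟩ for all z, this reads F(x⁺, y) − F(x, y) ≤ −(κ / (ω · ‖u‖_∞)) · ‖u − u'‖₂². -/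

import Mathlib

set_option autoImplicit false

open scoped RealInnerProductSpace
open Finset

noncomputable section

/-- The lifted vector `(t, y) ∈ ℝ × ℝⁿ = ℝ^{n+1}`. -/
def pr {n : ℕ} (t : ℝ) (y : EuclideanSpace ℝ (Fin n)) :
    EuclideanSpace ℝ (Fin (n + 1)) :=
  WithLp.toLp 2 (Fin.cons t (fun i => y i) : Fin (n + 1) → ℝ)

/-- The conic hull `cone({κ} × X) = {α • (κ, x) : α ≥ 0, x ∈ X}`. -/
def coneLift {n : ℕ} (κ : ℝ) (X : Set (EuclideanSpace ℝ (Fin n))) :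
    Set (EuclideanSpace ℝ (Fin (n + 1))) :=
  {u | ∃ α : ℝ, 0 ≤ α ∧ ∃ x ∈ X, u = α • pr κ x}

/-- `p` is the Euclidean orthogonal projection of `u` onto the set `S`. -/
def IsProjOn {E : Type*} [NormedAddCommGroup E] [InnerProductSpace ℝ E]
    (u : E) (S : Set E) (p : E) : Prop :=
  p ∈ S ∧ ∀ z ∈ S, dist u p ≤ dist u z

/-- The max-norm `‖u‖_∞ = max_i |u_i|` on `ℝ^{n+1}`. -/
def maxNorm {n : ℕ} (u : EuclideanSpace ℝ (Fin (n + 1))) : ℝ :=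
  Finset.univ.sup' ⟨0, Finset.mem_univ 0⟩ fun i => |u i|

lemma inner_pr {n : ℕ} (t t' : ℝ) (y y' : EuclideanSpace ℝ (Fin n)) :
    ⟪pr t y, pr t' y'⟫ = t * t' + ⟪y, y'⟫ := by
  simp [pr, PiLp.inner_apply, Fin.sum_univ_succ, RCLike.inner_apply, mul_comm]

lemma coneLift_convex {n : ℕ} {κ : ℝ} {X : Set (EuclideanSpace ℝ (Fin n))}
    (hX : Convex ℝ X) : Convex ℝ (coneLift κ X) := by
  rintro _ ⟨a, ha, x1, hx1, rfl⟩ _ ⟨b, hb, x2, hx2, rfl⟩ s t hs ht hst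
  by_cases hγ : s * a + t * b = 0
  · have h1 : s * a = 0 := by nlinarith [mul_nonneg hs ha, mul_nonneg ht hb]
    have h2 : t * b = 0 := by nlinarith [mul_nonneg hs ha, mul_nonneg ht hb]
    exact ⟨0, le_refl 0, x1, hx1, by simp [smul_smul, h1, h2]⟩
  · have hγpos : 0 < s * a + t * b :=
      lt_of_le_of_ne (by positivity) (Ne.symm hγ)
    refine ⟨s * a + t * b, hγpos.le,
      (s * a / (s * a + t * b)) • x1 + (t * b / (s * a + t * b)) • x2,
      hX hx1 hx2 (by positivity) (by positivity) (by field_simp), ?_⟩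
    ext i
    refine Fin.cases ?_ (fun j => ?_) i
    · show s * (a * κ) + t * (b * κ) = (s * a + t * b) * κ
      ring
    · show s * (a * x1 j) + t * (b * x2 j) =
        (s * a + t * b) * (s * a / (s * a + t * b) * x1 j + t * b / (s * a + t * b) * x2 j)
      field_simp

lemma projOn_vi {E : Type*} [NormedAddCommGroup E] [InnerProductSpace ℝ E]
    {S : Set E} (hS : Convex ℝ S) {w p : E} (h : IsProjOn w S p) :
    ∀ z ∈ S, ⟪w - p, z - p⟫ ≤ 0 := by
  have hne : Nonempty S := ⟨⟨p, h.1⟩⟩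
  rw [← norm_eq_iInf_iff_real_inner_le_zero hS h.1]
  refine le_antisymm (le_ciInf fun z => ?_)
    (ciInf_le (f := fun z : S => ‖w - (z : E)‖) ⟨0, fun _ ⟨_, hh⟩ => hh ▸ norm_nonneg _⟩ ⟨p, h.1⟩)
  simpa [dist_eq_norm] using h.2 z z.2

/-- per-iteration claim of Theorem 6, part 1: under a CBA⁺ update
`u = π_C(u' + ω v)` with `u' = α • (κ, x)`, `v = (⟨f, x⟩/κ, −f)`, and
`u = β • (κ, x⁺)` with `β > 0`, one has
`⟨f, x⁺⟩ ≤ ⟨f, x⟩ − (κ/(ω ‖u‖_∞)) ‖u − u'‖₂²`. -/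
theorem stmt12 {n : ℕ} (X : Set (EuclideanSpace ℝ (Fin n)))
    (hXne : X.Nonempty) (hXcv : Convex ℝ X) (hXcp : IsCompact X)
    (κ : ℝ) (hκ : IsGreatest ((fun x => ‖x‖) '' X) κ) (hκpos : 0 < κ)
    (ω : ℝ) (hω : 0 < ω) (f : EuclideanSpace ℝ (Fin n))
    (x : EuclideanSpace ℝ (Fin n)) (hx : x ∈ X)
    (α : ℝ) (hα : 0 ≤ α)
    (u' u : EuclideanSpace ℝ (Fin (n + 1)))
    (hu' : u' = α • pr κ x)
    (hu : IsProjOn (u' + ω • pr (⟪f, x⟫ / κ) (-f)) (coneLift κ X) u)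
    (hune : u ≠ 0)
    (xp : EuclideanSpace ℝ (Fin n)) (hxp : xp ∈ X)
    (β : ℝ) (hβ : 0 < β) (huβ : u = β • pr κ xp) :
    ⟪f, xp⟫ ≤ ⟪f, x⟫ - κ / (ω * maxNorm u) * ‖u - u'‖ ^ 2 := by
  set v : EuclideanSpace ℝ (Fin (n + 1)) := pr (⟪f, x⟫ / κ) (-f) with hv
  set d : ℝ := ⟪f, x⟫ - ⟪f, xp⟫ with hd
  have hvu' : ⟪v, u'⟫ = 0 := by
    rw [hu', real_inner_smul_right, hv, inner_pr]
    rw [div_mul_cancel₀ _ (ne_of_gt hκpos)]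
    simp [inner_neg_left]
  have hvu : ⟪v, u⟫ = β * d := by
    rw [huβ, real_inner_smul_right, hv, inner_pr]
    rw [div_mul_cancel₀ _ (ne_of_gt hκpos)]
    rw [inner_neg_left, hd]
    ring
  have hu'C : u' ∈ coneLift κ X := ⟨α, hα, x, hx, hu'⟩
  have hvi := projOn_vi (coneLift_convex hXcv) hu u' hu'C
  have key : ‖u - u'‖ ^ 2 ≤ ω * (β * d) := by
    have expand : ⟪u' + ω • v - u, u' - u⟫ =
        ‖u' - u‖ ^ 2 + ω * (⟪v, u'⟫ - ⟪v, u⟫) := by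
      have : u' + ω • v - u = (u' - u) + ω • v := by abel
      rw [this, inner_add_left, real_inner_smul_left, real_inner_self_eq_norm_sq,
        inner_sub_right]
    rw [expand, hvu', hvu, zero_sub] at hvi
    rw [norm_sub_rev u u']
    linarith
  have hu0 : u 0 = β * κ := by rw [huβ]; simp [pr]
  have hM : β * κ ≤ maxNorm u := by
    have h0 : |u 0| ≤ maxNorm u := Finset.le_sup' (fun i => |u i|) (Finset.mem_univ 0)
    rw [hu0, abs_of_pos (by positivity)] at h0
    exact h0
  have hMpos : 0 < maxNorm u := lt_of_lt_of_le (by positivity) hM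
  have hdnn : 0 ≤ d := by nlinarith [key, sq_nonneg ‖u - u'‖, mul_pos hω hβ]
  have final : κ / (ω * maxNorm u) * ‖u - u'‖ ^ 2 ≤ d := by
    rw [div_mul_eq_mul_div, div_le_iff₀ (by positivity)]
    nlinarith [sq_nonneg ‖u - u'‖, mul_nonneg (mul_nonneg hdnn hω.le) (sub_nonneg.2 hM)]
  linarith [final]

end
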